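/- Let a > 0, c ≥ 0, M > 0, and let x : ℝ → ℝ^k be a C¹ curve defined for all t ∈ ℝ with ‖x(t)‖ ≤ M for all t and ⟨x'(t), x(t)⟩ ≥ ‖x(t)‖·(a‖x(t)‖ − c) for all t ∈ ℝ. Then ‖x(t)‖ ≤ 2c/a for all t ∈ ℝ. -/

import Mathlib

open RealInnerProductSpace

/-- If a globally defined C¹ curve `x : ℝ → ℝᵏ` stays bounded
(`‖x t‖ ≤ M`) and satisfies the differential inequality
`⟨x'(t), x(t)⟩ ≥ ‖x(t)‖ (a‖x(t)‖ − c)`, then `‖x(t)‖ ≤ 2c/a` for all `t`. -/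
theorem localization_differential_inequality
    (k : ℕ) (a c M : ℝ) (ha : 0 < a) (hc : 0 ≤ c) (hM : 0 < M)
    (x x' : ℝ → EuclideanSpace ℝ (Fin k))
    (hderiv : ∀ t : ℝ, HasDerivAt x (x' t) t)
    (hcont : Continuous x')
    (hbound : ∀ t : ℝ, ‖x t‖ ≤ M)
    (hineq : ∀ t : ℝ, ‖x t‖ * (a * ‖x t‖ - c) ≤ ⟪x' t, x t⟫) :
    ∀ t : ℝ, ‖x t‖ ≤ 2 * c / a := by
  intro t₀
  by_contra hcon
  push_neg at hcon
  -- f t = ‖x t‖²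
  set f : ℝ → ℝ := fun t => ⟪x t, x t⟫ with hf_def
  have hF : ∀ t, HasDerivAt f (2 * ⟪x' t, x t⟫) t := by
    intro t
    have h := (hderiv t).inner ℝ (hderiv t)
    refine h.congr_deriv ?_
    rw [real_inner_comm (x t) (x' t)]
    ring
  have hf_eq : ∀ t, f t = ‖x t‖ ^ 2 := by
    intro t
    show ⟪x t, x t⟫ = ‖x t‖ ^ 2
    rw [real_inner_self_eq_norm_sq]
  have hr0 : 0 ≤ 2 * c / a := by positivity
  have hxt₀pos : 0 < ‖x t₀‖ := lt_of_le_of_lt hr0 hcon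
  set y : ℝ := f t₀ with hy_def
  have hy_pos : 0 < y := by rw [hy_def, hf_eq]; positivity
  set δ : ℝ := a * y with hδ_def
  have hδ_pos : 0 < δ := mul_pos ha hy_pos
  -- the endpoint
  set b : ℝ := t₀ + 2 * (M ^ 2 + 1) / δ with hb_def
  have hb_gt : t₀ < b := by
    rw [hb_def]
    have : 0 < 2 * (M ^ 2 + 1) / δ := by positivity
    linarith
  -- key derivative bound when ‖x t‖ ≥ ‖x t₀‖
  have key : ∀ t : ℝ, ‖x t₀‖ ≤ ‖x t‖ → δ ≤ 2 * ⟪x' t, x t⟫ := by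
    intro t ht
    have hxt : 2 * c / a < ‖x t‖ := lt_of_lt_of_le hcon ht
    have hca : c ≤ a * ‖x t‖ / 2 := by
      have := (div_lt_iff₀ ha).mp hxt
      nlinarith
    have h1 : ‖x t‖ * (a * ‖x t‖ / 2) ≤ ‖x t‖ * (a * ‖x t‖ - c) := by
      have hx0 : 0 ≤ ‖x t‖ := norm_nonneg _
      nlinarith
    have h2 : a * ‖x t‖ ^ 2 ≤ 2 * ⟪x' t, x t⟫ := by
      have := hineq t
      nlinarith
    have h3 : y ≤ ‖x t‖ ^ 2 := by
      rw [hy_def, hf_eq]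
      have := norm_nonneg (x t₀)
      nlinarith
    rw [hδ_def]
    nlinarith
  -- fencing: -(f) ≤ B on [t₀, b], where B t = -y - (δ/2)(t - t₀)
  set B : ℝ → ℝ := fun t => -y - δ / 2 * (t - t₀) with hB_def
  have hB' : ∀ s : ℝ, HasDerivAt B (-(δ / 2)) s := by
    intro s
    have h1 : HasDerivAt (fun t : ℝ => δ / 2 * (t - t₀)) (δ / 2) s := by
      simpa using ((hasDerivAt_id s).sub_const t₀).const_mul (δ / 2)
    simpa [hB_def, sub_eq_add_neg] using (h1.const_sub (-y))
  have hFcont : ContinuousOn (fun t => -(f t)) (Set.Icc t₀ b) := by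
    apply Continuous.continuousOn
    exact (continuous_neg.comp (by
      have : Continuous f := by
        apply continuous_iff_continuousAt.mpr
        intro t
        exact (hF t).continuousAt
      exact this))
  have fence : ∀ ⦃s : ℝ⦄, s ∈ Set.Icc t₀ b → -(f s) ≤ B s := by
    apply image_le_of_deriv_right_lt_deriv_boundary
      (f := fun t => -(f t)) (f' := fun t => -(2 * ⟪x' t, x t⟫))
      (B := B) (B' := fun _ => -(δ / 2))
    · exact hFcont
    · intro s _
      exact ((hF s).neg).hasDerivWithinAt
    · simp [hB_def, hy_def]
    · exact hB'
    · intro s hs heq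
      have hs1 : t₀ ≤ s := hs.1
      have hBy : B s ≤ -y := by
        rw [hB_def]
        have : 0 ≤ δ / 2 * (s - t₀) := by
          apply mul_nonneg (by positivity)
          linarith
        simp only
        linarith
      have hfy : y ≤ f s := by
        have : -(f s) ≤ -y := heq ▸ hBy
        linarith
      have hnorm : ‖x t₀‖ ≤ ‖x s‖ := by
        have h1 : ‖x t₀‖ ^ 2 ≤ ‖x s‖ ^ 2 := by
          rw [← hf_eq, ← hf_eq]; exact hfy
        exact le_of_pow_le_pow_left₀ two_ne_zero (norm_nonneg _) h1
      have := key s hnorm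
      linarith
  -- contradiction at t = b
  have hfb := fence (Set.right_mem_Icc.mpr hb_gt.le)
  have hBb : B b = -y - (M ^ 2 + 1) := by
    rw [hB_def, hb_def]
    field_simp
    ring
  have hfbM : f b ≤ M ^ 2 := by
    rw [hf_eq]
    have := hbound b
    have := norm_nonneg (x b)
    nlinarith
  rw [hBb] at hfb
  linarith
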